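/- Let Ω be a finite set, Θ a finite set, and θ̃ : Ω → Θ a function. Let μ₀ be a probability measure on Ω with full support, and let γ = Σₙ γₙ δ_{νₙ} be a finitely supported Bayes-plausible distribution over posteriors on Θ (i.e., Σₙ γₙ νₙ = μ₀ ∘ θ̃⁻¹, γₙ > 0, Σₙ γₙ = 1). Suppose for each n we are given conditional probabilities μₙ(·|θ_j) on Ω, supported on θ̃⁻¹(θ_j), satisfying μ₀(ω|θ_j) = Σₙ γₙ νₙ(θ_j) μₙ(ω|θ_j) / (Σₙ γₙ νₙ(θ_j)) for all ω, j with Σₙ γₙ νₙ(θ_j) > 0. Define μₙ(ω) = νₙ(θ̃(ω)) μₙ(ω|θ̃(ω)). Then each μₙ is a probability measure on Ω, the pushforward of μₙ under θ̃ equals νₙ, and Σₙ γₙ μₙ = μ₀ (Bayes plausibility of the extension). -/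
import Mathlib


open Finset

/-- The finite linear system (1)-(4) of the paper produces a valid minimum-informative
extension: each μₙ is a probability on Ω, its pushforward under θ̃ is νₙ, and Σₙ γₙ μₙ = μ₀. -/
theorem stmt_8 {Ω Θ : Type*} [Fintype Ω] [Fintype Θ] [DecidableEq Θ]
    (tθ : Ω → Θ) (μ₀ : Ω → ℝ) (hμpos : ∀ ω, 0 < μ₀ ω) (hμone : ∑ ω, μ₀ ω = 1)
    (N : ℕ) (γ : Fin N → ℝ) (ν : Fin N → Θ → ℝ)
    (hγpos : ∀ n, 0 < γ n) (hγone : ∑ n, γ n = 1)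
    (hνnn : ∀ n θ, 0 ≤ ν n θ) (hνone : ∀ n, ∑ θ, ν n θ = 1)
    (hbayes : ∀ θj, ∑ n, γ n * ν n θj =
      ∑ ω ∈ Finset.univ.filter (fun ω => tθ ω = θj), μ₀ ω)
    (μc : Fin N → Θ → Ω → ℝ)
    (hμcnn : ∀ n θj ω, 0 ≤ μc n θj ω)
    (hμcsupp : ∀ n θj ω, tθ ω ≠ θj → μc n θj ω = 0)
    (hμcone : ∀ n θj, ∑ ω, μc n θj ω = 1)
    (hconsist : ∀ θj, 0 < ∑ n, γ n * ν n θj → ∀ ω, tθ ω = θj →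
      μ₀ ω / (∑ ω' ∈ Finset.univ.filter (fun ω' => tθ ω' = θj), μ₀ ω') =
      (∑ n, γ n * ν n θj * μc n θj ω) / (∑ n, γ n * ν n θj))
    (μn : Fin N → Ω → ℝ)
    (hμn : ∀ n ω, μn n ω = ν n (tθ ω) * μc n (tθ ω) ω) :
    (∀ n, (∀ ω, 0 ≤ μn n ω) ∧ ∑ ω, μn n ω = 1) ∧
    (∀ n θj, ∑ ω ∈ Finset.univ.filter (fun ω => tθ ω = θj), μn n ω = ν n θj) ∧
    (∀ ω, ∑ n, γ n * μn n ω = μ₀ ω) := by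
  -- fiber sum of μc equals 1
  have hfib : ∀ n θj, ∑ ω ∈ Finset.univ.filter (fun ω => tθ ω = θj), μc n θj ω = 1 := by
    intro n θj
    rw [← hμcone n θj]
    symm
    rw [← Finset.sum_filter_add_sum_filter_not Finset.univ (fun ω => tθ ω = θj)]
    have : ∑ ω ∈ Finset.univ.filter (fun ω => ¬ tθ ω = θj), μc n θj ω = 0 := by
      apply Finset.sum_eq_zero
      intro ω hω
      exact hμcsupp n θj ω (Finset.mem_filter.mp hω).2
    rw [this, add_zero]
  -- pushforward
  have hpush : ∀ n θj, ∑ ω ∈ Finset.univ.filter (fun ω => tθ ω = θj), μn n ω = ν n θj := by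
    intro n θj
    have : ∑ ω ∈ Finset.univ.filter (fun ω => tθ ω = θj), μn n ω
        = ∑ ω ∈ Finset.univ.filter (fun ω => tθ ω = θj), ν n θj * μc n θj ω := by
      apply Finset.sum_congr rfl
      intro ω hω
      have h := (Finset.mem_filter.mp hω).2
      rw [hμn, h]
    rw [this, ← Finset.mul_sum, hfib, mul_one]
  refine ⟨fun n => ⟨fun ω => ?_, ?_⟩, hpush, fun ω => ?_⟩
  · rw [hμn]
    exact mul_nonneg (hνnn n _) (hμcnn n _ ω)
  · rw [← Finset.sum_fiberwise_of_maps_to (fun i (_ : i ∈ Finset.univ) => Finset.mem_univ (tθ i)) (μn n)]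
    simp only [hpush]
    exact hνone n
  · set θj := tθ ω with hθ
    have hS : 0 < ∑ n, γ n * ν n θj := by
      rw [hbayes]
      have hmem : ω ∈ Finset.univ.filter (fun ω' => tθ ω' = θj) := by
        simp [hθ]
      calc (0:ℝ) < μ₀ ω := hμpos ω
        _ ≤ _ := Finset.single_le_sum (fun i _ => (hμpos i).le) hmem
    have h := hconsist θj hS ω rfl
    rw [← hbayes] at h
    have h2 : μ₀ ω = ∑ n, γ n * ν n θj * μc n θj ω := by
      field_simp at h
      exact h
    rw [h2]
    apply Finset.sum_congr rfl
    intro n _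
    rw [hμn, ← hθ, mul_assoc]
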